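/- Let A be an n×n real symmetric positive definite matrix with energy decomposition ℰ = {E_k}_{k=1}^m, and let S ⊆ {1,…,n}. Then the interior energy, restricted energy, and closed energy of S satisfy underline(A)_S ⪯ A_S ⪯ overline(A)_S in the Loewner order, where A_S = P_S A P_S. -/

import Mathlib

open Matrix BigOperators
open scoped Classical

noncomputable section

/-- The 0/1 diagonal projection matrix onto the coordinates in `S`. -/
def projSet {n : ℕ} (S : Finset (Fin n)) : Matrix (Fin n) (Fin n) ℝ :=
  Matrix.diagonal (fun i => if i ∈ S then (1:ℝ) else 0)

/-- The diagonal concentration `E^d` of `E`: diagonal with entries `∑_j |E_{ij}|`. -/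
def diagConc {n : ℕ} (E : Matrix (Fin n) (Fin n) ℝ) : Matrix (Fin n) (Fin n) ℝ :=
  Matrix.diagonal (fun i => ∑ j, |E i j|)

/-- `E` is interior to `S` if `P_S E P_S = E`. -/
def InteriorTo {n : ℕ} (E : Matrix (Fin n) (Fin n) ℝ) (S : Finset (Fin n)) : Prop :=
  projSet S * E * projSet S = E

/-- The interior energy `underline(A)_S = ∑_{E_k interior to S} E_k`. -/
def interiorEnergy {n m : ℕ} (E : Fin m → Matrix (Fin n) (Fin n) ℝ) (S : Finset (Fin n)) :
    Matrix (Fin n) (Fin n) ℝ :=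
  ∑ k, if InteriorTo (E k) S then E k else 0

/-- The closed energy
`overline(A)_S = underline(A)_S + ∑_{E_k not interior to S} P_S E_k^d P_S`. -/
def closedEnergy {n m : ℕ} (E : Fin m → Matrix (Fin n) (Fin n) ℝ) (S : Finset (Fin n)) :
    Matrix (Fin n) (Fin n) ℝ :=
  interiorEnergy E S +
    ∑ k, if InteriorTo (E k) S then 0 else projSet S * diagConc (E k) * projSet S

/-- A partition of `{1,…,n}` into pairwise disjoint nonempty subsets covering everything. -/
def IsPartition {n M : ℕ} (P : Fin M → Finset (Fin n)) : Prop :=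
  (∀ j, (P j).Nonempty) ∧ (∀ j j', j ≠ j' → Disjoint (P j) (P j')) ∧
    Finset.univ.biUnion P = Finset.univ

/-- Euclidean norm of a vector. -/
def norm2 {ι : Type} [Fintype ι] (x : ι → ℝ) : ℝ := Real.sqrt (x ⬝ᵥ x)

/-- `A`-energy norm of a vector: `‖x‖_A = √(xᵀ A x)`. -/
def normA {ι : Type} [Fintype ι] (A : Matrix ι ι ℝ) (x : ι → ℝ) : ℝ :=
  Real.sqrt (x ⬝ᵥ A.mulVec x)

/-- Spectral (ℓ²-operator) norm of a square real matrix. -/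
def specNorm {ι : Type} [Fintype ι] [DecidableEq ι] (B : Matrix ι ι ℝ) : ℝ :=
  ‖Matrix.toEuclideanCLM (𝕜 := ℝ) B‖

/-- Smallest value of the Rayleigh quotient; for a symmetric matrix this is the
smallest eigenvalue. -/
def lamMin {ι : Type} [Fintype ι] (B : Matrix ι ι ℝ) : ℝ :=
  sInf {r : ℝ | ∃ x : ι → ℝ, x ⬝ᵥ x = 1 ∧ r = x ⬝ᵥ B.mulVec x}

/-- Largest value of the Rayleigh quotient; for a symmetric matrix this is the
largest eigenvalue. -/
def lamMax {ι : Type} [Fintype ι] (B : Matrix ι ι ℝ) : ℝ :=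
  sSup {r : ℝ | ∃ x : ι → ℝ, x ⬝ᵥ x = 1 ∧ r = x ⬝ᵥ B.mulVec x}

/-- Patch layers: `S_0(P_j) = P_j` and `S_{k+1}(P_j)` adds all patches `P_{j'}` such that
some energy element has a nonzero row indexed in `P_{j'}` and a nonzero row indexed in
`S_k(P_j)`. -/
def layer {n m M : ℕ} (E : Fin m → Matrix (Fin n) (Fin n) ℝ) (P : Fin M → Finset (Fin n))
    (j : Fin M) : ℕ → Finset (Fin n)
  | 0 => P j
  | (k+1) => layer E P j k ∪ Finset.univ.biUnion (fun j' =>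
      if (∃ l, (∃ r ∈ P j', (E l) r ≠ 0) ∧ (∃ r ∈ layer E P j k, (E l) r ≠ 0))
      then P j' else ∅)

/-- Condition factor `δ(P_j) = ‖(Φ̂_jᵀ (overline(A)_{P_j}|_{P_j})⁻¹ Φ̂_j)⁻¹‖₂`, where
`Φ̂_j` is the submatrix of `Φ_j` on the rows in `P_j` and `overline(A)_{P_j}|_{P_j}` is the
submatrix of the closed energy on the rows and columns in `P_j`. -/
def condFactor {n m : ℕ} (E : Fin m → Matrix (Fin n) (Fin n) ℝ) (S : Finset (Fin n))
    {qj : ℕ} (Φj : Matrix (Fin n) (Fin qj) ℝ) : ℝ :=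
  specNorm ((((Φj.submatrix (Subtype.val : {i // i ∈ S} → Fin n) id))ᵀ *
      ((closedEnergy E S).submatrix (Subtype.val : {i // i ∈ S} → Fin n) Subtype.val)⁻¹ *
      (Φj.submatrix (Subtype.val : {i // i ∈ S} → Fin n) id))⁻¹)

/-- The combined matrix `Φ = [Φ_1 ⋯ Φ_M]`, with columns indexed by pairs `⟨j, c⟩`
(column `c` of the block `Φ_j`). -/
def bigPhi {n M : ℕ} (q : Fin M → ℕ) (Φ : (j : Fin M) → Matrix (Fin n) (Fin (q j)) ℝ) :
    Matrix (Fin n) ((j : Fin M) × Fin (q j)) ℝ :=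
  fun r c => Φ c.1 r c.2

/-- `ψ` is a minimizer of `‖x‖_A` over vectors supported in `S` subject to `Φᵀ x = e_i`. -/
def IsMinimizerOn {n : ℕ} {ι : Type} [Fintype ι] [DecidableEq ι]
    (A : Matrix (Fin n) (Fin n) ℝ) (Φ : Matrix (Fin n) ι ℝ) (S : Finset (Fin n)) (i : ι)
    (ψ : Fin n → ℝ) : Prop :=
  (∀ r, r ∉ S → ψ r = 0) ∧ Φᵀ.mulVec ψ = Pi.single i 1 ∧
    ∀ x : Fin n → ℝ, (∀ r, r ∉ S → x r = 0) → Φᵀ.mulVec x = Pi.single i 1 →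
      ψ ⬝ᵥ A.mulVec ψ ≤ x ⬝ᵥ A.mulVec x

/-- `α(P_j)`: the largest value of `(xᵀ overline(A)_{P_j} x)/(xᵀ underline(A)_{P_j} x)`
over nonzero `x` in the column span of `U_j`. -/
def alphaFactor {n m : ℕ} (E : Fin m → Matrix (Fin n) (Fin n) ℝ) (S : Finset (Fin n))
    {uj : ℕ} (Uj : Matrix (Fin n) (Fin uj) ℝ) : ℝ :=
  sSup {r : ℝ | ∃ x ∈ Submodule.span ℝ (Set.range Ujᵀ), x ≠ 0 ∧
    r = (x ⬝ᵥ (closedEnergy E S).mulVec x) / (x ⬝ᵥ (interiorEnergy E S).mulVec x)}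

lemma posSemidef_add' {n : ℕ} {X Y : Matrix (Fin n) (Fin n) ℝ}
    (hX : X.PosSemidef) (hY : Y.PosSemidef) : (X + Y).PosSemidef := by
  refine Matrix.PosSemidef.of_dotProduct_mulVec_nonneg (hX.1.add hY.1) fun x => ?_
  simp only [Matrix.add_mulVec, dotProduct_add]
  exact add_nonneg (hX.dotProduct_mulVec_nonneg x) (hY.dotProduct_mulVec_nonneg x)

lemma posSemidef_sum' {n m : ℕ} (f : Fin m → Matrix (Fin n) (Fin n) ℝ)
    (h : ∀ k, (f k).PosSemidef) : (∑ k, f k).PosSemidef := by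
  refine Finset.sum_induction f Matrix.PosSemidef (fun a b ha hb => posSemidef_add' ha hb)
    Matrix.PosSemidef.zero (fun k _ => h k)

lemma projSet_conjTranspose {n : ℕ} (S : Finset (Fin n)) : (projSet S)ᴴ = projSet S := by
  simp [projSet, Matrix.diagonal_conjTranspose]

lemma proj_conj_posSemidef {n : ℕ} {X : Matrix (Fin n) (Fin n) ℝ} (hX : X.PosSemidef)
    (S : Finset (Fin n)) : (projSet S * X * projSet S).PosSemidef := by
  have := hX.mul_mul_conjTranspose_same (projSet S)
  rwa [projSet_conjTranspose] at this

lemma diagConc_sub_posSemidef {n : ℕ} {E : Matrix (Fin n) (Fin n) ℝ} (hE : E.PosSemidef) :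
    (diagConc E - E).PosSemidef := by
  have hsym : ∀ i j, E j i = E i j := fun i j => by
    have := hE.1
    rw [Matrix.IsHermitian] at this
    conv_rhs => rw [← this]
    simp [Matrix.conjTranspose_apply]
  refine Matrix.PosSemidef.of_dotProduct_mulVec_nonneg ?_ ?_
  · show (diagConc E - E)ᴴ = diagConc E - E
    ext i j
    simp only [Matrix.conjTranspose_apply, Matrix.sub_apply, star_trivial, diagConc,
      Matrix.diagonal_apply, hsym i j]
    rcases eq_or_ne i j with h | h
    · subst h; rfl
    · simp [h, Ne.symm h]
  · intro x
    simp only [star_trivial]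
    have hd : x ⬝ᵥ (diagConc E) *ᵥ x = ∑ i, ∑ j, |E i j| * (x i)^2 := by
      simp only [diagConc, dotProduct, Matrix.mulVec_diagonal]
      refine Finset.sum_congr rfl fun i _ => ?_
      rw [Finset.sum_mul, Finset.mul_sum]
      exact Finset.sum_congr rfl fun j _ => by ring
    have hq : x ⬝ᵥ E *ᵥ x = ∑ i, ∑ j, x i * E i j * x j := by
      simp only [dotProduct, Matrix.mulVec, dotProduct, Finset.mul_sum]
      exact Finset.sum_congr rfl fun i _ => Finset.sum_congr rfl fun j _ => by ring
    have hswap : ∑ i, ∑ j, |E i j| * (x i)^2 = ∑ i, ∑ j, |E i j| * (x j)^2 := by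
      rw [Finset.sum_comm]
      exact Finset.sum_congr rfl fun i _ => Finset.sum_congr rfl fun j _ => by rw [hsym]
    have key : ∀ i j, 0 ≤ |E i j| * (x i)^2 + |E i j| * (x j)^2 - 2 * (x i * E i j * x j) := by
      intro i j
      have h1 : x i * E i j * x j ≤ |E i j| * (|x i| * |x j|) := by
        calc x i * E i j * x j ≤ |x i * E i j * x j| := le_abs_self _
        _ = |E i j| * (|x i| * |x j|) := by rw [abs_mul, abs_mul]; ring
      nlinarith [sq_nonneg (|x i| - |x j|), abs_nonneg (E i j), sq_abs (x i), sq_abs (x j)]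
    have h2 : 0 ≤ 2 * (x ⬝ᵥ (diagConc E - E) *ᵥ x) := by
      have : 2 * (x ⬝ᵥ (diagConc E - E) *ᵥ x) =
          ∑ i, ∑ j, (|E i j| * (x i)^2 + |E i j| * (x j)^2 - 2 * (x i * E i j * x j)) := by
        simp only [Matrix.sub_mulVec, dotProduct_sub, hd, hq, Finset.sum_add_distrib,
          Finset.sum_sub_distrib, ← Finset.mul_sum]
        rw [← hswap]
        ring
      rw [this]
      exact Finset.sum_nonneg fun i _ => Finset.sum_nonneg fun j _ => key i j
    linarith

/-- Let `A` be SPD with energy decomposition `{E_k}`, and `S ⊆ {1,…,n}`.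
Then `underline(A)_S ⪯ A_S ⪯ overline(A)_S` in the Loewner order, where `A_S = P_S A P_S`. -/
theorem interiorEnergy_le_restricted_le_closedEnergy {n m : ℕ}
    (A : Matrix (Fin n) (Fin n) ℝ) (hA : A.PosDef)
    (E : Fin m → Matrix (Fin n) (Fin n) ℝ) (hE : ∀ k, (E k).PosSemidef)
    (hsum : A = ∑ k, E k) (S : Finset (Fin n)) :
    (projSet S * A * projSet S - interiorEnergy E S).PosSemidef ∧
      (closedEnergy E S - projSet S * A * projSet S).PosSemidef := by
  have hPAP : projSet S * A * projSet S = ∑ k, projSet S * E k * projSet S := by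
    rw [hsum, Finset.mul_sum, Finset.sum_mul]
  constructor
  · have heq : projSet S * A * projSet S - interiorEnergy E S =
        ∑ k, if InteriorTo (E k) S then 0 else projSet S * E k * projSet S := by
      rw [hPAP, interiorEnergy, ← Finset.sum_sub_distrib]
      refine Finset.sum_congr rfl fun k _ => ?_
      by_cases h : InteriorTo (E k) S
      · rw [if_pos h, if_pos h, h, sub_self]
      · rw [if_neg h, if_neg h, sub_zero]
    rw [heq]
    refine posSemidef_sum' _ fun k => ?_
    by_cases h : InteriorTo (E k) S
    · rw [if_pos h]; exact Matrix.PosSemidef.zero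
    · rw [if_neg h]; exact proj_conj_posSemidef (hE k) S
  · have heq : closedEnergy E S - projSet S * A * projSet S =
        ∑ k, if InteriorTo (E k) S then 0
          else projSet S * (diagConc (E k) - E k) * projSet S := by
      rw [closedEnergy, interiorEnergy, hPAP, ← Finset.sum_add_distrib,
        ← Finset.sum_sub_distrib]
      refine Finset.sum_congr rfl fun k _ => ?_
      by_cases h : InteriorTo (E k) S
      · rw [if_pos h, if_pos h, if_pos h, add_zero, h, sub_self]
      · rw [if_neg h, if_neg h, if_neg h, zero_add, Matrix.mul_sub, Matrix.sub_mul]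
    rw [heq]
    refine posSemidef_sum' _ fun k => ?_
    by_cases h : InteriorTo (E k) S
    · rw [if_pos h]; exact Matrix.PosSemidef.zero
    · rw [if_neg h]; exact proj_conj_posSemidef (diagConc_sub_posSemidef (hE k)) S
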